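/- Let r ≥ 1 and let M_1,…,M_r, N_1,…,N_r ∈ ℂ^{n×n} all be upper triangular. Define the rn×rn pencil Q₁(λ), with r×r block structure of n×n blocks, by: the (i,i) block is λ·M_{r+1−i} for i = 1,…,r, the (i+1,i) block is −N_{r+1−i} for i = 1,…,r−1, the (1,r) block is −N_1, and all other blocks are zero. Then there exists ε ∈ {1,−1} such that det Q₁(λ) = ε·det(λ^r·M_1 M_2 ⋯ M_r − N_1 N_2 ⋯ N_r) for all λ ∈ ℂ. -/

import Mathlib

open Matrix


lemma cyclic_det (s : ℕ) (a b : Fin (s+1) → ℂ) :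
    (Matrix.of fun i j : Fin (s+1) =>
      (if i = j then a i else 0) +
      (if (i:ℕ) = (j:ℕ)+1 ∨ ((i:ℕ) = 0 ∧ (j:ℕ) = s+1-1) then -b j else 0)).det
      = ∏ i, a i - ∏ i, b i := by
  induction s with
  | zero =>
      rw [det_fin_one]
      simp [Matrix.of_apply, sub_eq_add_neg]
  | succ s _ =>
      set C : Matrix (Fin (s+2)) (Fin (s+2)) ℂ := Matrix.of fun i j =>
        (if i = j then a i else 0) +
        (if (i:ℕ) = (j:ℕ)+1 ∨ ((i:ℕ) = 0 ∧ (j:ℕ) = s+2-1) then -b j else 0) with hC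
      have h00 : det (C.submatrix Fin.succ ((0 : Fin (s+2)).succAbove)) =
          ∏ p : Fin (s+1), a p.succ := by
        rw [Fin.succAbove_zero]
        rw [Matrix.det_of_lowerTriangular]
        · apply Finset.prod_congr rfl
          intro p _
          simp [hC, Matrix.of_apply, Fin.val_succ]
        · intro p q hpq
          simp only [Matrix.submatrix_apply, hC, Matrix.of_apply, Fin.val_succ]
          have h1 : ¬ (p.succ = q.succ) := by
            simp only [Fin.succ_inj]; exact fun h => by simp [h] at hpq
          have hq : (p:ℕ) < (q:ℕ) := hpq
          have h2 : ¬ ((p:ℕ)+1 = (q:ℕ)+1+1 ∨ ((p:ℕ)+1 = 0 ∧ (q:ℕ)+1 = s+2-1)) := by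
            omega
          rw [if_neg h1, if_neg h2, add_zero]
      have hlast : det (C.submatrix Fin.succ ((Fin.last (s+1)).succAbove)) =
          ∏ p : Fin (s+1), (-b p.castSucc) := by
        rw [Fin.succAbove_last]
        rw [Matrix.det_of_upperTriangular]
        · apply Finset.prod_congr rfl
          intro p _
          have h1 : ¬ (p.succ = p.castSucc) := by
            intro h
            have := congrArg Fin.val h
            simp [Fin.val_succ] at this
          have h2 : ((p.succ : ℕ) = (p.castSucc : ℕ)+1 ∨ ((p.succ:ℕ) = 0 ∧ (p.castSucc:ℕ) = s+2-1)) := by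
            left; simp [Fin.val_succ]
          simp only [Matrix.submatrix_apply, hC, Matrix.of_apply, if_neg h1, if_pos h2, zero_add]
        · intro p q hpq
          have hq : (q:ℕ) < (p:ℕ) := hpq
          simp only [Matrix.submatrix_apply, hC, Matrix.of_apply]
          have h1 : ¬ (p.succ = q.castSucc) := by
            intro h
            have := congrArg Fin.val h
            simp only [Fin.val_succ, Fin.coe_castSucc] at this
            omega
          have h2 : ¬ ((p.succ : ℕ) = (q.castSucc:ℕ)+1 ∨ ((p.succ:ℕ) = 0 ∧ (q.castSucc:ℕ) = s+2-1)) := by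
            simp only [Fin.val_succ, Fin.coe_castSucc]
            omega
          rw [if_neg h1, if_neg h2, add_zero]
      rw [Matrix.det_succ_row_zero]
      have hzero : ∀ j : Fin (s+2), j ∉ ({0, Fin.last (s+1)} : Finset (Fin (s+2))) →
          (-1 :ℂ)^(j:ℕ) * C 0 j * det (C.submatrix Fin.succ j.succAbove) = 0 := by
        intro j hj
        simp only [Finset.mem_insert, Finset.mem_singleton] at hj
        push_neg at hj
        have hj0 : (j:ℕ) ≠ 0 := fun h => hj.1 (Fin.ext h)
        have hjl : (j:ℕ) ≠ s+1 := fun h => hj.2 (Fin.ext h)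
        have hC0 : C 0 j = 0 := by
          simp only [hC, Matrix.of_apply]
          have h1 : ¬ ((0 : Fin (s+2)) = j) := fun h => hj.1 h.symm
          have h2 : ¬ (((0:Fin (s+2)) : ℕ) = (j:ℕ)+1 ∨ (((0:Fin (s+2)):ℕ) = 0 ∧ (j:ℕ) = s+2-1)) := by
            simp only [Fin.val_zero]
            omega
          rw [if_neg h1, if_neg h2, add_zero]
        rw [hC0, mul_zero, zero_mul]
      rw [← Finset.sum_subset (Finset.subset_univ ({0, Fin.last (s+1)} : Finset (Fin (s+2))))
        (fun j _ hj => hzero j hj)]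
      have hne : (0 : Fin (s+2)) ≠ Fin.last (s+1) := by
        intro h
        have := congrArg Fin.val h
        simp at this
      rw [Finset.sum_pair hne]
      have hC00 : C 0 0 = a 0 := by
        simp only [hC, Matrix.of_apply, if_pos rfl]
        have h2 : ¬ (((0:Fin (s+2)) : ℕ) = ((0:Fin (s+2)):ℕ)+1 ∨ (((0:Fin (s+2)):ℕ) = 0 ∧ ((0:Fin (s+2)):ℕ) = s+2-1)) := by
          simp only [Fin.val_zero]
          omega
        rw [if_neg h2, add_zero, if_pos trivial]
      have hC0l : C 0 (Fin.last (s+1)) = -b (Fin.last (s+1)) := by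
        simp only [hC, Matrix.of_apply]
        have h1 : ¬ ((0 : Fin (s+2)) = Fin.last (s+1)) := hne
        have h2 : (((0:Fin (s+2)) : ℕ) = ((Fin.last (s+1)):ℕ)+1 ∨ (((0:Fin (s+2)):ℕ) = 0 ∧ ((Fin.last (s+1)):ℕ) = s+2-1)) := by
          right; simp
        rw [if_neg h1, if_pos h2, zero_add]
      rw [hC00, hC0l, h00, hlast]
      have hprodneg : ∏ p : Fin (s+1), (-b p.castSucc) =
          (-1:ℂ)^(s+1) * ∏ p : Fin (s+1), b p.castSucc := by
        have : ∀ p : Fin (s+1), -b p.castSucc = (-1:ℂ) * b p.castSucc := fun p => by ring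
        simp only [this]
        rw [Finset.prod_mul_distrib]
        simp
      have hpa : ∏ i : Fin (s+2), a i = a 0 * ∏ p : Fin (s+1), a p.succ :=
        Fin.prod_univ_succ a
      have hpb : ∏ i : Fin (s+2), b i = (∏ p : Fin (s+1), b p.castSucc) * b (Fin.last (s+1)) :=
        Fin.prod_univ_castSucc b
      rw [hprodneg, hpa, hpb]
      simp only [Fin.val_zero, Fin.val_last, pow_zero]
      have hsq : ((-1:ℂ)^(s+1)) * ((-1:ℂ)^(s+1)) = 1 := by
        rw [← pow_add, ← two_mul, pow_mul, neg_one_sq, one_pow]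
      ring_nf
      ring_nf at hsq
      rw [hsq]
      ring
lemma listprod_triangular (n : ℕ) (L : List (Matrix (Fin n) (Fin n) ℂ))
    (h : ∀ A ∈ L, ∀ i j : Fin n, (j : ℕ) < (i : ℕ) → A i j = 0) :
    (∀ i j : Fin n, (j : ℕ) < (i : ℕ) → L.prod i j = 0) ∧
    (∀ k : Fin n, L.prod k k = (L.map fun A => A k k).prod) := by
  induction L with
  | nil =>
      constructor
      · intro i j hij
        simp only [List.prod_nil]
        exact Matrix.one_apply_ne (fun hij' => by simp [hij'] at hij)
      · intro k; simp [Matrix.one_apply]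
  | cons A L ih =>
      have hA := h A List.mem_cons_self
      obtain ⟨ih1, ih2⟩ := ih (fun B hB => h B (List.mem_cons_of_mem A hB))
      constructor
      · intro i j hij
        rw [List.prod_cons, Matrix.mul_apply]
        apply Finset.sum_eq_zero
        intro m _
        rcases lt_or_ge (m : ℕ) (i : ℕ) with hm | hm
        · rw [hA i m hm, zero_mul]
        · rw [ih1 m j (lt_of_lt_of_le hij hm), mul_zero]
      · intro k
        rw [List.prod_cons, Matrix.mul_apply, List.map_cons, List.prod_cons, ← ih2 k]
        apply Finset.sum_eq_single k
        · intro m _ hm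
          rcases lt_or_ge (m : ℕ) (k : ℕ) with h' | h'
          · rw [hA k m h', zero_mul]
          · have : (k:ℕ) < (m:ℕ) := lt_of_le_of_ne h' (fun he => hm (Fin.ext he.symm))
            rw [ih1 m k this, mul_zero]
        · intro h'; exact absurd (Finset.mem_univ k) h'


/-- The `rn × rn` block pencil `Q₁(λ)`: block `(i,i)` is `λ·M_{r+1-i}`, block `(i+1,i)` is
`-N_{r+1-i}` for `i = 1,…,r-1`, block `(1,r)` is `-N_1`, all other blocks zero. -/
def pencilQ1 (r n : ℕ) (M N : Fin r → Matrix (Fin n) (Fin n) ℂ) (μ : ℂ) :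
    Matrix (Fin r × Fin n) (Fin r × Fin n) ℂ :=
  Matrix.of fun p q =>
    (if p.1 = q.1 then μ * M p.1.rev p.2 q.2 else 0) +
    (if (p.1 : ℕ) = (q.1 : ℕ) + 1 ∨ ((p.1 : ℕ) = 0 ∧ (q.1 : ℕ) = r - 1) then
      -(N q.1.rev p.2 q.2) else 0)

/-- If all `M_i`, `N_i` are upper triangular, then there is a sign `ε ∈ {1,-1}` such that
`det Q₁(λ) = ε·det(λ^r·M_1⋯M_r − N_1⋯N_r)` for all `λ`. -/
theorem pencilQ1_det_triangular (r n : ℕ) (hr : 1 ≤ r)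
    (M N : Fin r → Matrix (Fin n) (Fin n) ℂ)
    (hM : ∀ k : Fin r, ∀ i j : Fin n, (j : ℕ) < (i : ℕ) → M k i j = 0)
    (hN : ∀ k : Fin r, ∀ i j : Fin n, (j : ℕ) < (i : ℕ) → N k i j = 0) :
    ∃ ε : ℂ, (ε = 1 ∨ ε = -1) ∧
      ∀ μ : ℂ, (pencilQ1 r n M N μ).det =
        ε * (μ ^ r • (List.ofFn fun i : Fin r => M i).prod
              - (List.ofFn fun i : Fin r => N i).prod).det := by
  obtain ⟨s, rfl⟩ : ∃ s, r = s + 1 := ⟨r - 1, by omega⟩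
  refine ⟨1, Or.inl rfl, fun μ => ?_⟩
  rw [one_mul]
  -- RHS computation
  obtain ⟨hP1, hP2⟩ := listprod_triangular n (List.ofFn fun i : Fin (s+1) => M i)
    (by intro A hA; rw [List.mem_ofFn] at hA; obtain ⟨i, rfl⟩ := hA; exact hM i)
  obtain ⟨hQ1, hQ2⟩ := listprod_triangular n (List.ofFn fun i : Fin (s+1) => N i)
    (by intro A hA; rw [List.mem_ofFn] at hA; obtain ⟨i, rfl⟩ := hA; exact hN i)
  set P := (List.ofFn fun i : Fin (s+1) => M i).prod with hP
  set Q := (List.ofFn fun i : Fin (s+1) => N i).prod with hQ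
  have hRtri : (μ ^ (s+1) • P - Q).BlockTriangular id := by
    intro i j hij
    have : (j:ℕ) < (i:ℕ) := hij
    simp [Matrix.sub_apply, Matrix.smul_apply, hP1 i j this, hQ1 i j this]
  have hRHS : (μ ^ (s+1) • P - Q).det =
      ∏ k : Fin n, (μ ^ (s+1) * ∏ i : Fin (s+1), M i k k - ∏ i : Fin (s+1), N i k k) := by
    rw [Matrix.det_of_upperTriangular hRtri]
    apply Finset.prod_congr rfl
    intro k _
    have hmap : ∀ (F : Fin (s+1) → Matrix (Fin n) (Fin n) ℂ),
        ((List.ofFn fun i => F i).map fun A => A k k).prod = ∏ i : Fin (s+1), F i k k := by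
      intro F
      rw [List.map_ofFn, List.prod_ofFn]
      rfl
    rw [Matrix.sub_apply, Matrix.smul_apply, hP2 k, hQ2 k, hmap M, hmap N, smul_eq_mul]
  rw [hRHS]
  -- LHS computation
  rw [← Matrix.det_submatrix_equiv_self (Equiv.prodComm (Fin n) (Fin (s+1)))
    (pencilQ1 (s+1) n M N μ)]
  set W := (pencilQ1 (s+1) n M N μ).submatrix (Equiv.prodComm (Fin n) (Fin (s+1)))
    (Equiv.prodComm (Fin n) (Fin (s+1))) with hW
  have hWtri : W.BlockTriangular (Prod.fst : Fin n × Fin (s+1) → Fin n) := by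
    intro p q hpq
    obtain ⟨pk, pi⟩ := p
    obtain ⟨qk, qi⟩ := q
    have hlt : (qk : ℕ) < (pk : ℕ) := hpq
    simp only [hW, Matrix.submatrix_apply, Equiv.prodComm_apply, Prod.swap_prod_mk,
      pencilQ1, Matrix.of_apply]
    rw [hM _ _ _ hlt, hN _ _ _ hlt]
    simp
  rw [hWtri.det_fintype]
  apply Finset.prod_congr rfl
  intro k _
  -- identify the square block with the cyclic matrix
  let ek : Fin (s+1) ≃ {p : Fin n × Fin (s+1) // p.1 = k} :=
    { toFun := fun j => ⟨(k, j), rfl⟩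
      invFun := fun p => p.1.2
      left_inv := fun j => rfl
      right_inv := fun p => by
        rcases p with ⟨⟨l, j⟩, hp⟩
        simp only at hp
        subst hp
        rfl }
  rw [← Matrix.det_submatrix_equiv_self ek (W.toSquareBlock Prod.fst k)]
  have hblock : (W.toSquareBlock Prod.fst k).submatrix ek ek =
      Matrix.of (fun i j : Fin (s+1) =>
        (if i = j then (μ * M i.rev k k) else 0) +
        (if (i:ℕ) = (j:ℕ)+1 ∨ ((i:ℕ) = 0 ∧ (j:ℕ) = s+1-1) then -(N j.rev k k) else 0)) := by
    ext i j
    show W ((ek i) : Fin n × Fin (s+1)) ((ek j) : Fin n × Fin (s+1)) = _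
    have hei : ((ek i) : Fin n × Fin (s+1)) = (k, i) := rfl
    have hej : ((ek j) : Fin n × Fin (s+1)) = (k, j) := rfl
    rw [hei, hej]
    simp only [hW, Matrix.submatrix_apply, Equiv.prodComm_apply, Prod.swap_prod_mk,
      pencilQ1, Matrix.of_apply]
  rw [hblock, cyclic_det]
  congr 1
  · have : ∏ i : Fin (s+1), M i.rev k k = ∏ i : Fin (s+1), M i k k :=
      Fintype.prod_equiv Fin.revPerm (fun i => M i.rev k k) (fun i => M i k k) (fun i => rfl)
    rw [Finset.prod_mul_distrib, Finset.prod_const, Finset.card_univ, Fintype.card_fin, this]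
  · exact Fintype.prod_equiv Fin.revPerm (fun i => N i.rev k k) (fun i => N i k k) (fun i => rfl)
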